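/- Fix m_r > 0, z > 0 and D ≥ 0, and for m_c > 0 let γ = z·m_c/m_r, V(γ) = 1 − (1+γ)^{−2}, ω(m_c) = √(m_r / V(γ)) · (log₂(1+γ) − D/m_r) · ln 2, and ε(m_c) = Q(ω(m_c)), where Q(x) = ∫_x^∞ (1/√(2π)) e^{−t²/2} dt. Then ε is convex as a function of m_c on the set { m_c > 0 : γ = z·m_c/m_r ≥ 1 and log₂(1+γ) ≥ D/m_r }. -/

import Mathlib

open MeasureTheory

/-- The Gaussian Q-function `Q(x) = ∫_x^∞ (1/√(2π))·e^{−t²/2} dt`. -/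
noncomputable def gaussQ (x : ℝ) : ℝ :=
  ∫ t in Set.Ioi x, (Real.sqrt (2 * Real.pi))⁻¹ * Real.exp (-t ^ 2 / 2)

/-- Finite-blocklength packet error probability:
`ε = Q(√(mr/V(γ))·(log₂(1+γ) − D/mr)·ln 2)` with `γ = z·mc/mr` and
`V(γ) = 1 − (1+γ)^{−2}`. -/
noncomputable def errProb (mc mr D z : ℝ) : ℝ :=
  gaussQ (Real.sqrt (mr / (1 - ((1 + z * mc / mr) ^ 2)⁻¹)) *
    (Real.logb 2 (1 + z * mc / mr) - D / mr) * Real.log 2)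

/-! ### Auxiliary definitions and lemmas about the Gaussian pdf -/

noncomputable def gaussPdf (t : ℝ) : ℝ := (Real.sqrt (2 * Real.pi))⁻¹ * Real.exp (-t ^ 2 / 2)

lemma gaussPdf_cont : Continuous gaussPdf := by
  unfold gaussPdf
  exact continuous_const.mul ((continuous_pow 2).neg.div_const 2).rexp

lemma gaussPdf_integrable : Integrable gaussPdf := by
  have h : Integrable fun x : ℝ => Real.exp (-(1/2 : ℝ) * x ^ 2) :=
    integrable_exp_neg_mul_sq (by norm_num)
  refine (h.const_mul (Real.sqrt (2 * Real.pi))⁻¹).congr ?_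
  filter_upwards with x
  unfold gaussPdf; ring_nf

lemma gaussQ_eq (x : ℝ) : gaussQ x = gaussQ 0 - ∫ t in (0:ℝ)..x, gaussPdf t := by
  have key : ∀ y : ℝ, gaussQ y = (∫ t, gaussPdf t) - ∫ t in Set.Iic y, gaussPdf t := by
    intro y
    have := integral_add_compl (measurableSet_Iic (a := y)) gaussPdf_integrable
    rw [Set.compl_Iic] at this
    have hQ : gaussQ y = ∫ t in Set.Ioi y, gaussPdf t := rfl
    rw [hQ]; linarith
  have := intervalIntegral.integral_Iic_sub_Iic (μ := volume) (f := gaussPdf)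
    (gaussPdf_integrable.integrableOn) (gaussPdf_integrable.integrableOn) (a := 0) (b := x)
  rw [key x, key 0]; linarith

lemma gaussQ_hasDerivAt (x : ℝ) : HasDerivAt gaussQ (-(gaussPdf x)) x := by
  have h := (gaussPdf_cont.integral_hasStrictDerivAt 0 x).hasDerivAt
  have h2 : HasDerivAt (fun y => gaussQ 0 - ∫ t in (0:ℝ)..y, gaussPdf t) (0 - gaussPdf x) x :=
    (hasDerivAt_const x (gaussQ 0)).sub h
  have hfun : (fun y => gaussQ 0 - ∫ t in (0:ℝ)..y, gaussPdf t) = gaussQ :=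
    funext fun y => (gaussQ_eq y).symm
  rw [hfun] at h2
  simpa using h2

lemma gaussPdf_hasDerivAt (x : ℝ) : HasDerivAt gaussPdf (-x * gaussPdf x) x := by
  have h1 : HasDerivAt (fun t : ℝ => -t ^ 2 / 2) (-x) x := by
    have := ((hasDerivAt_pow 2 x).neg).div_const 2
    simpa using this.congr_deriv (by ring)
  have h2 := (h1.exp).const_mul (Real.sqrt (2 * Real.pi))⁻¹
  unfold gaussPdf
  exact h2.congr_deriv (by ring)

lemma gaussQ_antitone : Antitone gaussQ := by
  apply antitone_of_deriv_nonpos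
  · exact fun x => (gaussQ_hasDerivAt x).differentiableAt
  · intro x
    rw [(gaussQ_hasDerivAt x).deriv]
    simp only [neg_nonpos]
    unfold gaussPdf; positivity

lemma gaussQ_convexOn : ConvexOn ℝ (Set.Ici (0:ℝ)) gaussQ := by
  apply convexOn_of_hasDerivWithinAt2_nonneg (f' := fun x => -(gaussPdf x))
    (f'' := fun x => x * gaussPdf x) (convex_Ici 0)
  · exact fun x _ => ((gaussQ_hasDerivAt x).differentiableAt.continuousAt).continuousWithinAt
  · exact fun x _ => (gaussQ_hasDerivAt x).hasDerivWithinAt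
  · intro x _
    exact (((gaussPdf_hasDerivAt x).neg).congr_deriv (by ring)).hasDerivWithinAt
  · intro x hx
    rw [interior_Ici] at hx
    have : 0 ≤ gaussPdf x := by unfold gaussPdf; positivity
    exact mul_nonneg (le_of_lt hx) this

/-! ### The inner function and its concavity -/

noncomputable def auxG (c t : ℝ) : ℝ :=
  (1 + t) / Real.sqrt (t ^ 2 + 2 * t) * (Real.log (1 + t) - c)

noncomputable def auxG1 (c t : ℝ) : ℝ :=
  (Real.sqrt (t ^ 2 + 2 * t))⁻¹ - (Real.log (1 + t) - c) / Real.sqrt (t ^ 2 + 2 * t) ^ 3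

noncomputable def auxG2 (c t : ℝ) : ℝ :=
  3 * (1 + t) * (Real.log (1 + t) - c) / Real.sqrt (t ^ 2 + 2 * t) ^ 5
    - (1 + t) / Real.sqrt (t ^ 2 + 2 * t) ^ 3
    - 1 / ((1 + t) * Real.sqrt (t ^ 2 + 2 * t) ^ 3)

lemma sqrtu_hasDerivAt {t : ℝ} (ht : 0 < t) :
    HasDerivAt (fun t : ℝ => Real.sqrt (t ^ 2 + 2 * t))
      ((t + 1) / Real.sqrt (t ^ 2 + 2 * t)) t := by
  have hu : (0:ℝ) < t ^ 2 + 2 * t := by nlinarith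
  have hinner : HasDerivAt (fun t : ℝ => t ^ 2 + 2 * t) (2 * t + 2) t := by
    exact ((hasDerivAt_pow 2 t).add ((hasDerivAt_id t).const_mul 2)).congr_deriv (by norm_num)
  have h := (Real.hasDerivAt_sqrt hu.ne').comp t hinner
  refine h.congr_deriv (Eq.symm ?_)
  field_simp

lemma auxG_hasDerivAt (c : ℝ) {t : ℝ} (ht : 0 < t) :
    HasDerivAt (auxG c) (auxG1 c t) t := by
  have hu : (0:ℝ) < t ^ 2 + 2 * t := by nlinarith
  have hs : (0:ℝ) < Real.sqrt (t ^ 2 + 2 * t) := Real.sqrt_pos.2 hu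
  have hs2 : Real.sqrt (t ^ 2 + 2 * t) ^ 2 = t ^ 2 + 2 * t := Real.sq_sqrt hu.le
  have h1t : (0:ℝ) < 1 + t := by linarith
  have hnum : HasDerivAt (fun t : ℝ => (1 + t)) 1 t := by
    simpa using (hasDerivAt_id t).const_add 1
  have hA : HasDerivAt (fun t : ℝ => (1 + t) / Real.sqrt (t ^ 2 + 2 * t))
      ((1 * Real.sqrt (t ^ 2 + 2 * t) - (1 + t) * ((t + 1) / Real.sqrt (t ^ 2 + 2 * t))) /
        Real.sqrt (t ^ 2 + 2 * t) ^ 2) t := hnum.div (sqrtu_hasDerivAt ht) hs.ne'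
  have hL : HasDerivAt (fun t : ℝ => Real.log (1 + t) - c) (1 / (1 + t)) t := by
    have := (Real.hasDerivAt_log h1t.ne').comp t hnum
    simpa [one_div] using this.sub_const c
  have h := hA.mul hL
  unfold auxG auxG1
  refine h.congr_deriv (Eq.symm ?_)
  set s := Real.sqrt (t ^ 2 + 2 * t) with hsdef
  clear_value s
  field_simp
  linear_combination (-(Real.log (1+t) - c)) * hs2

lemma auxG1_hasDerivAt (c : ℝ) {t : ℝ} (ht : 0 < t) :
    HasDerivAt (auxG1 c) (auxG2 c t) t := by
  have hu : (0:ℝ) < t ^ 2 + 2 * t := by nlinarith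
  have hs : (0:ℝ) < Real.sqrt (t ^ 2 + 2 * t) := Real.sqrt_pos.2 hu
  have h1t : (0:ℝ) < 1 + t := by linarith
  have hnum : HasDerivAt (fun t : ℝ => (1 + t)) 1 t := by
    simpa using (hasDerivAt_id t).const_add 1
  have hL : HasDerivAt (fun t : ℝ => Real.log (1 + t) - c) (1 / (1 + t)) t := by
    have := (Real.hasDerivAt_log h1t.ne').comp t hnum
    simpa [one_div] using this.sub_const c
  have hinv : HasDerivAt (fun t : ℝ => (Real.sqrt (t ^ 2 + 2 * t))⁻¹)
      (-((t + 1) / Real.sqrt (t ^ 2 + 2 * t)) / Real.sqrt (t ^ 2 + 2 * t) ^ 2) t :=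
    (sqrtu_hasDerivAt ht).inv hs.ne'
  have hcube : HasDerivAt (fun t : ℝ => Real.sqrt (t ^ 2 + 2 * t) ^ 3)
      (3 * Real.sqrt (t ^ 2 + 2 * t) ^ 2 * ((t + 1) / Real.sqrt (t ^ 2 + 2 * t))) t := by
    have := (sqrtu_hasDerivAt ht).pow 3
    exact this.congr_deriv (by norm_num)
  have hdiv := hL.div hcube (by positivity)
  have h := hinv.sub hdiv
  unfold auxG1 auxG2
  refine h.congr_deriv (Eq.symm ?_)
  set s := Real.sqrt (t ^ 2 + 2 * t) with hsdef
  clear_value s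
  field_simp
  ring

lemma auxG2_nonpos (c : ℝ) {t : ℝ} (ht : 1 ≤ t) (hc : 0 ≤ c) : auxG2 c t ≤ 0 := by
  have ht0 : (0:ℝ) < t := by linarith
  have hu : (0:ℝ) < t ^ 2 + 2 * t := by nlinarith
  have hs : (0:ℝ) < Real.sqrt (t ^ 2 + 2 * t) := Real.sqrt_pos.2 hu
  have hs2 : Real.sqrt (t ^ 2 + 2 * t) ^ 2 = t ^ 2 + 2 * t := Real.sq_sqrt hu.le
  have h1t : (0:ℝ) < 1 + t := by linarith
  unfold auxG2
  set s := Real.sqrt (t ^ 2 + 2 * t) with hsdef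
  clear_value s
  have h3 : s ^ 3 = (t ^ 2 + 2 * t) * s := by rw [pow_succ, hs2]
  have h5 : s ^ 5 = (t ^ 2 + 2 * t) ^ 2 * s := by
    have : s ^ 5 = (s ^ 2) ^ 2 * s := by ring
    rw [this, hs2]
  have hL : Real.log (1 + t) ≤ t := by
    have := Real.log_le_sub_one_of_pos h1t
    linarith
  have hkey : 3 * (1 + t) ^ 2 * (Real.log (1 + t) - c)
      ≤ (t ^ 2 + 2 * t) * ((t ^ 2 + 2 * t) + 2) := by
    have hstep : Real.log (1 + t) - c ≤ t := by linarith
    have hsq : (0:ℝ) ≤ 3 * (1 + t) ^ 2 := by positivity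
    nlinarith [mul_le_mul_of_nonneg_left hstep hsq, pow_pos ht0 3, pow_pos ht0 4]
  have heq : 3 * (1 + t) * (Real.log (1 + t) - c) / s ^ 5
      - (1 + t) / s ^ 3 - 1 / ((1 + t) * s ^ 3) =
      (3 * (1 + t) ^ 2 * (Real.log (1 + t) - c)
        - (t ^ 2 + 2 * t) * ((t ^ 2 + 2 * t) + 2)) / ((1 + t) * ((t ^ 2 + 2 * t) ^ 2 * s)) := by
    rw [h3, h5]
    field_simp
    ring
  rw [heq]
  apply div_nonpos_of_nonpos_of_nonneg
  · linarith
  · positivity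

lemma auxG_concaveOn (c : ℝ) (hc : 0 ≤ c) :
    ConcaveOn ℝ {t : ℝ | 1 ≤ t ∧ c ≤ Real.log (1 + t)} (auxG c) := by
  set T := {t : ℝ | 1 ≤ t ∧ c ≤ Real.log (1 + t)} with hT
  have hTeq : T = Set.Ici (max 1 (Real.exp c - 1)) := by
    ext t
    simp only [hT, Set.mem_setOf_eq, Set.mem_Ici, max_le_iff]
    constructor
    · rintro ⟨h1, h2⟩
      refine ⟨h1, ?_⟩
      have : Real.exp c ≤ 1 + t := by
        rw [← Real.exp_log (x := 1 + t) (by linarith)]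
        exact Real.exp_le_exp.2 h2
      linarith
    · rintro ⟨h1, h2⟩
      refine ⟨h1, ?_⟩
      have : Real.exp c ≤ 1 + t := by linarith
      calc c = Real.log (Real.exp c) := (Real.log_exp c).symm
        _ ≤ Real.log (1 + t) := Real.log_le_log (Real.exp_pos c) this
  have hconv : Convex ℝ T := hTeq ▸ convex_Ici _
  have hmem : ∀ x ∈ T, (0:ℝ) < x := fun x hx => by
    have : (1:ℝ) ≤ x := hx.1
    linarith
  apply concaveOn_of_hasDerivWithinAt2_nonpos (f' := auxG1 c) (f'' := auxG2 c) hconv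
  · intro x hx
    exact ((auxG_hasDerivAt c (hmem x hx)).continuousAt).continuousWithinAt
  · intro x hx
    exact (auxG_hasDerivAt c (hmem x (interior_subset hx))).hasDerivWithinAt
  · intro x hx
    exact (auxG1_hasDerivAt c (hmem x (interior_subset hx))).hasDerivWithinAt
  · intro x hx
    exact auxG2_nonpos c (interior_subset hx).1 hc

/-! ### Rewriting the error probability argument -/

lemma omega_eq {mr D z mc : ℝ} (hmr : 0 < mr) (hγ : 1 ≤ z * mc / mr) :
    Real.sqrt (mr / (1 - ((1 + z * mc / mr) ^ 2)⁻¹)) *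
      (Real.logb 2 (1 + z * mc / mr) - D / mr) * Real.log 2
    = Real.sqrt mr * auxG (D * Real.log 2 / mr) (z * mc / mr) := by
  set γ := z * mc / mr with hγdef
  have hγ0 : (0:ℝ) < γ := lt_of_lt_of_le one_pos hγ
  have h1γ : (0:ℝ) < 1 + γ := by linarith
  have hu : (0:ℝ) < γ ^ 2 + 2 * γ := by nlinarith
  have hlog2 : (0:ℝ) < Real.log 2 := Real.log_pos (by norm_num)
  have h1 : mr / (1 - ((1 + γ) ^ 2)⁻¹) = mr * (1 + γ) ^ 2 / (γ ^ 2 + 2 * γ) := by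
    have hd : 1 - ((1 + γ) ^ 2)⁻¹ = (γ ^ 2 + 2 * γ) / (1 + γ) ^ 2 := by
      field_simp
      ring
    rw [hd, div_div_eq_mul_div]
  have h2 : Real.sqrt (mr * (1 + γ) ^ 2 / (γ ^ 2 + 2 * γ))
      = Real.sqrt mr * (1 + γ) / Real.sqrt (γ ^ 2 + 2 * γ) := by
    rw [Real.sqrt_div (by positivity), Real.sqrt_mul hmr.le, Real.sqrt_sq h1γ.le]
  have h3 : (Real.logb 2 (1 + γ) - D / mr) * Real.log 2
      = Real.log (1 + γ) - D * Real.log 2 / mr := by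
    rw [Real.logb]
    field_simp
  rw [h1, mul_assoc, h3, h2]
  unfold auxG
  ring

/-! ### Convexity helper lemmas -/

lemma convexOn_congr {s : Set ℝ} {f g : ℝ → ℝ} (h : ConvexOn ℝ s f)
    (he : ∀ x ∈ s, f x = g x) : ConvexOn ℝ s g := by
  refine ⟨h.1, fun x hx y hy a b ha hb hab => ?_⟩
  rw [← he _ hx, ← he _ hy, ← he _ (h.1 hx hy ha hb hab)]
  exact h.2 hx hy ha hb hab

lemma convexOn_comp_mul_left {T : Set ℝ} {F : ℝ → ℝ} (h : ConvexOn ℝ T F) (k : ℝ) :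
    ConvexOn ℝ {x : ℝ | k * x ∈ T} (fun x => F (k * x)) := by
  refine ⟨fun x hx y hy a b ha hb hab => ?_, fun x hx y hy a b ha hb hab => ?_⟩
  · simp only [Set.mem_setOf_eq] at *
    have hcomb : k * (a • x + b • y) = a • (k * x) + b • (k * y) := by
      simp only [smul_eq_mul]; ring
    rw [hcomb]
    exact h.1 hx hy ha hb hab
  · simp only [Set.mem_setOf_eq] at hx hy
    have hcomb : k * (a • x + b • y) = a • (k * x) + b • (k * y) := by
      simp only [smul_eq_mul]; ring
    simp only [hcomb]
    exact h.2 hx hy ha hb hab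

lemma convexOn_comp_antitone {s : Set ℝ} {f g : ℝ → ℝ}
    (hg : ConvexOn ℝ (Set.Ici (0:ℝ)) g) (hg' : Antitone g) (hf : ConcaveOn ℝ s f)
    (hf0 : ∀ x ∈ s, 0 ≤ f x) : ConvexOn ℝ s (fun x => g (f x)) := by
  refine ⟨hf.1, fun x hx y hy a b ha hb hab => ?_⟩
  have h1 : a • f x + b • f y ≤ f (a • x + b • y) := hf.2 hx hy ha hb hab
  calc g (f (a • x + b • y)) ≤ g (a • f x + b • f y) := hg' h1
    _ ≤ a • g (f x) + b • g (f y) := hg.2 (hf0 x hx) (hf0 y hy) ha hb hab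

/-- Lemma 2, first part (partial convexity in the charging duration): for fixed
`mr > 0`, `z > 0`, `D ≥ 0`, the error probability `mc ↦ ε(mc)` is convex on the
set `{mc > 0 : γ = z·mc/mr ≥ 1 and log₂(1+γ) ≥ D/mr}`. -/
theorem errProb_convexOn_charging (mr z D : ℝ)
    (hmr : 0 < mr) (hz : 0 < z) (hD : 0 ≤ D) :
    ConvexOn ℝ
      {mc : ℝ | 0 < mc ∧ 1 ≤ z * mc / mr ∧
        D / mr ≤ Real.logb 2 (1 + z * mc / mr)}
      (fun mc => errProb mc mr D z) := by
  have hl2 : (0:ℝ) < Real.log 2 := Real.log_pos (by norm_num)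
  set c := D * Real.log 2 / mr with hc_def
  have hc : 0 ≤ c := div_nonneg (mul_nonneg hD hl2.le) hmr.le
  set T := {t : ℝ | 1 ≤ t ∧ c ≤ Real.log (1 + t)} with hT
  have hconc : ConcaveOn ℝ T (fun t => Real.sqrt mr * auxG c t) := by
    have := (auxG_concaveOn c hc).smul (Real.sqrt_nonneg mr)
    simpa [smul_eq_mul] using this
  have hnonneg : ∀ t ∈ T, 0 ≤ Real.sqrt mr * auxG c t := by
    intro t ht
    have h1 : (0:ℝ) ≤ 1 + t := by have := ht.1; linarith
    have : 0 ≤ auxG c t :=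
      mul_nonneg (div_nonneg h1 (Real.sqrt_nonneg _)) (sub_nonneg.2 ht.2)
    exact mul_nonneg (Real.sqrt_nonneg mr) this
  have hF : ConvexOn ℝ T (fun t => gaussQ (Real.sqrt mr * auxG c t)) :=
    convexOn_comp_antitone gaussQ_convexOn gaussQ_antitone hconc hnonneg
  have hcomp := convexOn_comp_mul_left hF (z / mr)
  have hset : {mc : ℝ | 0 < mc ∧ 1 ≤ z * mc / mr ∧
      D / mr ≤ Real.logb 2 (1 + z * mc / mr)} = {x : ℝ | z / mr * x ∈ T} := by
    ext x
    have hxg : z * x / mr = z / mr * x := by ring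
    simp only [Set.mem_setOf_eq, hT]
    constructor
    · rintro ⟨hx0, hγ, hlogb⟩
      rw [← hxg]
      refine ⟨hγ, ?_⟩
      rw [Real.logb, le_div_iff₀ hl2] at hlogb
      calc c = D / mr * Real.log 2 := by rw [hc_def]; ring
        _ ≤ Real.log (1 + z * x / mr) := hlogb
    · rintro ⟨hγ, hlog⟩
      rw [← hxg] at hγ hlog
      have hx0 : 0 < x := by
        by_contra h
        push_neg at h
        have h1 : z * x ≤ 0 := mul_nonpos_of_nonneg_of_nonpos hz.le h
        have h2 : z * x / mr ≤ 0 := div_nonpos_of_nonpos_of_nonneg h1 hmr.le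
        linarith
      refine ⟨hx0, hγ, ?_⟩
      rw [Real.logb, le_div_iff₀ hl2]
      calc D / mr * Real.log 2 = c := by rw [hc_def]; ring
        _ ≤ Real.log (1 + z * x / mr) := hlog
  rw [hset]
  apply convexOn_congr hcomp
  intro x hx
  simp only [Set.mem_setOf_eq, hT] at hx
  have hγ : 1 ≤ z * x / mr := by
    rw [show z * x / mr = z / mr * x by ring]
    exact hx.1
  show gaussQ (Real.sqrt mr * auxG c (z / mr * x)) = errProb x mr D z
  unfold errProb
  rw [omega_eq hmr hγ, ← hc_def, show z * x / mr = z / mr * x by ring]
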